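/- Let f : ℝ → ℝ be continuous and let F : ℝ × ℝ → ℝ be a numerical flux consistent with f (i.e. F(v,v) = f(v) for all v) and monotone (nondecreasing in its first argument and nonincreasing in its second argument). Then for any v₁, v₂ ∈ ℝ and any smooth convex function η : ℝ → ℝ, the viscosity ∫_{v₁}^{v₂} η''(v) (f(v) − F(v₁,v₂)) dv is nonnegative. -/
import Mathlib


/-- Nonnegativity of the numerical viscosity of a monotone, consistent numerical flux:
for any smooth convex `η`, the signed integral `∫_{v₁}^{v₂} η''(v) (f(v) − F(v₁,v₂)) dv`
is nonnegative. -/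
theorem viscosity_nonneg (f : ℝ → ℝ) (F : ℝ → ℝ → ℝ) (η : ℝ → ℝ)
    (hf : Continuous f)
    (hcons : ∀ v, F v v = f v)
    (hmono₁ : ∀ w, Monotone (fun v => F v w))
    (hmono₂ : ∀ v, Antitone (fun w => F v w))
    (hη : ContDiff ℝ 2 η)
    (hconv : ∀ v, 0 ≤ iteratedDeriv 2 η v)
    (v₁ v₂ : ℝ) :
    0 ≤ ∫ v in v₁..v₂, iteratedDeriv 2 η v * (f v - F v₁ v₂) := by
  rcases le_total v₁ v₂ with h | h
  · apply intervalIntegral.integral_nonneg h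
    intro v hv
    have h1 : F v₁ v₂ ≤ F v v₂ := hmono₁ v₂ hv.1
    have h2 : F v v₂ ≤ F v v := hmono₂ v hv.2
    have : F v₁ v₂ ≤ f v := by rw [← hcons v]; exact h1.trans h2
    exact mul_nonneg (hconv v) (by linarith)
  · rw [intervalIntegral.integral_symm v₂ v₁]
    have hnn : 0 ≤ ∫ v in v₂..v₁, -(iteratedDeriv 2 η v * (f v - F v₁ v₂)) := by
      apply intervalIntegral.integral_nonneg h
      intro v hv
      have h1 : F v v₂ ≤ F v₁ v₂ := hmono₁ v₂ hv.2
      have h2 : F v v ≤ F v v₂ := hmono₂ v hv.1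
      have : f v ≤ F v₁ v₂ := by rw [← hcons v]; exact h2.trans h1
      have := mul_nonpos_of_nonneg_of_nonpos (hconv v) (by linarith :
        f v - F v₁ v₂ ≤ 0)
      linarith
    rw [intervalIntegral.integral_neg] at hnn
    linarith
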